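/- The unrevealed weak-measurement map built from the Oreshkov–Brun operators equals a monitoring of strength 1 − sech(x): Σ_{s=±} P_s(x) ρ P_s(x) = sech(x) ρ + (1 − sech(x)) Σ_{s∈{0,1}} Π_s ρ Π_s, for all x ∈ ℝ. -/

import Mathlib

open Matrix Kronecker BigOperators Filter
open scoped ComplexOrder

noncomputable section

variable {dA dB : Type*} [Fintype dA] [DecidableEq dA] [Fintype dB] [DecidableEq dB]

/-- A projective measurement (complete family of mutually orthogonal projectors),
indexed by the space's own index type (WLOG, allowing zero projectors). -/
structure PVM (n : Type*) [Fintype n] [DecidableEq n] where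
  P : n → Matrix n n ℂ
  herm : ∀ b, (P b).IsHermitian
  idem : ∀ b, P b * P b = P b
  orth : ∀ b b', b ≠ b' → P b * P b' = 0
  complete : ∑ b, P b = 1

/-- Unrevealed projective measurement on subsystem B. -/
def PhiB (B : dB → Matrix dB dB ℂ) (ρ : Matrix (dA × dB) (dA × dB) ℂ) :
    Matrix (dA × dB) (dA × dB) ℂ :=
  ∑ b, ((1 : Matrix dA dA ℂ) ⊗ₖ B b) * ρ * ((1 : Matrix dA dA ℂ) ⊗ₖ B b)

/-- Unrevealed projective measurement on subsystem A. -/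
def PhiA (A : dA → Matrix dA dA ℂ) (ρ : Matrix (dA × dB) (dA × dB) ℂ) :
    Matrix (dA × dB) (dA × dB) ℂ :=
  ∑ a, (A a ⊗ₖ (1 : Matrix dB dB ℂ)) * ρ * (A a ⊗ₖ (1 : Matrix dB dB ℂ))

/-- The monitoring map of strength ε on subsystem B. -/
def monitorB (ε : ℝ) (B : dB → Matrix dB dB ℂ) (ρ : Matrix (dA × dB) (dA × dB) ℂ) :
    Matrix (dA × dB) (dA × dB) ℂ :=
  ((1 - ε : ℝ) : ℂ) • ρ + (ε : ℂ) • PhiB B ρ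

/-- The monitoring map of strength ε on subsystem A. -/
def monitorA (ε : ℝ) (A : dA → Matrix dA dA ℂ) (ρ : Matrix (dA × dB) (dA × dB) ℂ) :
    Matrix (dA × dB) (dA × dB) ℂ :=
  ((1 - ε : ℝ) : ℂ) • ρ + (ε : ℂ) • PhiA A ρ

/-- Partial trace over subsystem B (the reduced state of A). -/
def ptraceB (ρ : Matrix (dA × dB) (dA × dB) ℂ) : Matrix dA dA ℂ :=
  Matrix.of fun i j => ∑ k, ρ (i, k) (j, k)

/-- Partial trace over subsystem A (the reduced state of B). -/
def ptraceA (ρ : Matrix (dA × dB) (dA × dB) ℂ) : Matrix dB dB ℂ :=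
  Matrix.of fun i j => ∑ k, ρ (k, i) (k, j)

/-- Von Neumann entropy S(ρ) = -Tr ρ ln ρ, via eigenvalues. -/
def vnEntropy {n : Type*} [Fintype n] [DecidableEq n] (ρ : Matrix n n ℂ) : ℝ :=
  if h : ρ.IsHermitian then -∑ i, (h.eigenvalues i * Real.log (h.eigenvalues i)) else 0

/-- Quantum mutual information I(ρ) = S(ρ_A) + S(ρ_B) - S(ρ). -/
def mutInfo (ρ : Matrix (dA × dB) (dA × dB) ℂ) : ℝ :=
  vnEntropy (ptraceB ρ) + vnEntropy (ptraceA ρ) - vnEntropy ρ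

/-- Density operator predicate. -/
def IsDensity {n : Type*} [Fintype n] [DecidableEq n] (ρ : Matrix n n ℂ) : Prop :=
  ρ.PosSemidef ∧ ρ.trace = 1

/-- Quantum discord (distance-based form of Rulli–Sarandy). -/
def qd (ρ : Matrix (dA × dB) (dA × dB) ℂ) : ℝ :=
  ⨅ B : PVM dB, (mutInfo ρ - mutInfo (PhiB B.P ρ))

/-- Weak quantum discord. -/
def wqd (ε : ℝ) (ρ : Matrix (dA × dB) (dA × dB) ℂ) : ℝ :=
  ⨅ B : PVM dB, (mutInfo ρ - mutInfo (monitorB ε B.P ρ))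


/-- Oreshkov–Brun weak measurement operator P₊(x). -/
def OBplus {n : Type*} [Fintype n] [DecidableEq n] (Q0 Q1 : Matrix n n ℂ) (x : ℝ) :
    Matrix n n ℂ :=
  ((Real.sqrt ((1 - Real.tanh x) / 2) : ℝ) : ℂ) • Q0 +
    ((Real.sqrt ((1 + Real.tanh x) / 2) : ℝ) : ℂ) • Q1

/-- Oreshkov–Brun weak measurement operator P₋(x). -/
def OBminus {n : Type*} [Fintype n] [DecidableEq n] (Q0 Q1 : Matrix n n ℂ) (x : ℝ) :
    Matrix n n ℂ :=
  ((Real.sqrt ((1 + Real.tanh x) / 2) : ℝ) : ℂ) • Q0 +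
    ((Real.sqrt ((1 - Real.tanh x) / 2) : ℝ) : ℂ) • Q1

/-- The unrevealed weak-measurement map built from the Oreshkov–Brun
operators equals a monitoring of strength 1 - sech(x):
Σ_s P_s ρ P_s = sech(x) ρ + (1 - sech(x)) Σ_s Π_s ρ Π_s, for all x ∈ ℝ. -/
theorem OB_map_eq_monitoring {n : Type*} [Fintype n] [DecidableEq n]
    (Q0 Q1 : Matrix n n ℂ)
    (h0h : Q0.IsHermitian) (h1h : Q1.IsHermitian)
    (h0i : Q0 * Q0 = Q0) (h1i : Q1 * Q1 = Q1)
    (horth : Q0 * Q1 = 0) (hsum : Q0 + Q1 = 1)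
    (x : ℝ) (ρ : Matrix n n ℂ) :
    OBplus Q0 Q1 x * ρ * OBplus Q0 Q1 x + OBminus Q0 Q1 x * ρ * OBminus Q0 Q1 x =
      (((Real.cosh x)⁻¹ : ℝ) : ℂ) • ρ +
        ((1 - (Real.cosh x)⁻¹ : ℝ) : ℂ) • (Q0 * ρ * Q0 + Q1 * ρ * Q1) := by
  set a : ℝ := Real.sqrt ((1 - Real.tanh x) / 2) with ha
  set b : ℝ := Real.sqrt ((1 + Real.tanh x) / 2) with hb
  have hcosh : 0 < Real.cosh x := Real.cosh_pos x
  have hsc1 : Real.cosh x - Real.sinh x = Real.exp (-x) := Real.cosh_sub_sinh x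
  have hsc2 : Real.cosh x + Real.sinh x = Real.exp x := Real.cosh_add_sinh x
  have hexp1 : 0 < Real.exp (-x) := Real.exp_pos _
  have hexp2 : 0 < Real.exp x := Real.exp_pos _
  have htdef : Real.tanh x = Real.sinh x / Real.cosh x := Real.tanh_eq_sinh_div_cosh x
  have htanh1 : Real.tanh x ≤ 1 := by
    rw [htdef, div_le_one hcosh]; linarith
  have htanh2 : -1 ≤ Real.tanh x := by
    rw [htdef, le_div_iff₀ hcosh]; linarith
  have ha2 : a ^ 2 = (1 - Real.tanh x) / 2 := by
    rw [ha, Real.sq_sqrt (by linarith)]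
  have hb2 : b ^ 2 = (1 + Real.tanh x) / 2 := by
    rw [hb, Real.sq_sqrt (by linarith)]
  have hsumsq : a ^ 2 + b ^ 2 = 1 := by rw [ha2, hb2]; ring
  have hab : a * b = (Real.cosh x)⁻¹ / 2 := by
    rw [ha, hb, ← Real.sqrt_mul (by linarith)]
    have h1 : (1 - Real.tanh x) / 2 * ((1 + Real.tanh x) / 2)
        = ((Real.cosh x)⁻¹ / 2) ^ 2 := by
      have hc2 : Real.cosh x ^ 2 - Real.sinh x ^ 2 = 1 := Real.cosh_sq_sub_sinh_sq x
      have hcne : Real.cosh x ≠ 0 := ne_of_gt hcosh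
      have hee : Real.exp (-x) * Real.exp x = 1 := by
        rw [← Real.exp_add]; simp
      rw [htdef]
      field_simp
      linear_combination hc2
    rw [h1, Real.sqrt_sq (by positivity)]
  have expand : ∀ u v : ℝ, ((u : ℂ) • Q0 + (v : ℂ) • Q1) * ρ * ((u : ℂ) • Q0 + (v : ℂ) • Q1)
      = ((u : ℂ) * u) • (Q0 * ρ * Q0) + ((u : ℂ) * v) • (Q0 * ρ * Q1)
        + ((u : ℂ) * v) • (Q1 * ρ * Q0) + ((v : ℂ) * v) • (Q1 * ρ * Q1) := by
    intro u v
    simp only [add_mul, mul_add, smul_mul_assoc, mul_smul_comm, smul_smul]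
    module
  have hρ : ρ = Q0 * ρ * Q0 + Q0 * ρ * Q1 + Q1 * ρ * Q0 + Q1 * ρ * Q1 := by
    have h : (Q0 + Q1) * ρ * (Q0 + Q1) = ρ := by rw [hsum, one_mul, mul_one]
    conv_lhs => rw [← h]
    noncomm_ring
  rw [show OBplus Q0 Q1 x = ((a : ℂ) • Q0 + (b : ℂ) • Q1) from rfl,
    show OBminus Q0 Q1 x = ((b : ℂ) • Q0 + (a : ℂ) • Q1) from rfl,
    expand a b, expand b a]
  have hRHS : (((Real.cosh x)⁻¹ : ℝ) : ℂ) • ρ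
      = (((Real.cosh x)⁻¹ : ℝ) : ℂ) • (Q0 * ρ * Q0 + Q0 * ρ * Q1 + Q1 * ρ * Q0 + Q1 * ρ * Q1) := by
    rw [← hρ]
  rw [hRHS]
  have e1 : (a : ℂ) ^ 2 + (b : ℂ) ^ 2 = 1 := by exact_mod_cast hsumsq
  have e2 : (a : ℂ) * (b : ℂ) = (((Real.cosh x)⁻¹ : ℝ) : ℂ) / 2 := by
    exact_mod_cast hab
  push_cast [Complex.ofReal_inv] at e1 e2 ⊢
  match_scalars <;> first
    | linear_combination e1
    | linear_combination 2 * e2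
    | ring
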